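/- (Theorem 2.1) For every x ∈ ℝ the following estimates hold: 1/√2 ≤ (v'(x)/v(x))·d₁(x) ≤ √2 and 1/√2 ≤ (|u'(x)|/u(x))·d₂(x) ≤ √2; furthermore (1/√2)·d₁(x)d₂(x)/(d₁(x)+d₂(x)) ≤ ρ(x) ≤ √2·d₁(x)d₂(x)/(d₁(x)+d₂(x)), and (1/4)·d(x) ≤ ρ(x) ≤ (3/2)·d(x), where ρ(x) = u(x)v(x). -/

import Mathlib

open MeasureTheory Filter Real Set
open scoped ENNReal

noncomputable section

/-- Condition (1.5): for every `a > 0`, `∫_{x-a}^{x+a} q(t) dt → ∞` as `|x| → ∞`. -/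
def Cond15 (q : ℝ → ℝ) : Prop :=
  ∀ a : ℝ, 0 < a → Tendsto (fun x => ∫ t in (x - a)..(x + a), q t) (cocompact ℝ) atTop

/-- `(u, v)` is a principal fundamental system of solutions (PFSS) of `z'' = q z`.
Local absolute continuity of `u'` together with `u'' = q u` a.e. is encoded via the
fundamental theorem of calculus: `u' b - u' a = ∫_a^b q t * u t dt` for all `a, b`. -/
def IsPFSS (q u v : ℝ → ℝ) : Prop :=
  ContDiff ℝ 1 u ∧ ContDiff ℝ 1 v ∧
  (∀ a b : ℝ, deriv u b - deriv u a = ∫ t in a..b, q t * u t) ∧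
  (∀ a b : ℝ, deriv v b - deriv v a = ∫ t in a..b, q t * v t) ∧
  (∀ x, 0 < u x) ∧ (∀ x, 0 < v x) ∧
  (∀ x, deriv u x < 0) ∧ (∀ x, 0 < deriv v x) ∧
  (∀ x, deriv v x * u x - deriv u x * v x = 1) ∧
  (∀ x, u x = v x * ∫ t in Set.Ioi x, ((v t) ^ 2)⁻¹) ∧
  Tendsto u atTop (nhds 0) ∧ Tendsto (deriv u) atTop (nhds 0) ∧
  Tendsto v atTop atTop ∧ Tendsto (deriv v) atTop atTop ∧
  Tendsto v atBot (nhds 0) ∧ Tendsto (deriv v) atBot (nhds 0) ∧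
  Tendsto u atBot atTop ∧ Tendsto (fun x => |deriv u x|) atBot atTop

/-- The Green function: `G(x,t) = u(x) v(t)` for `x ≥ t`, `G(x,t) = u(t) v(x)` for `x ≤ t`. -/
def GreenFn (u v : ℝ → ℝ) (x t : ℝ) : ℝ := if x ≤ t then u t * v x else u x * v t

/-- The Green operator `(Gf)(x) = ∫_ℝ G(x,t) f(t) dt`. -/
def GreenOp (u v f : ℝ → ℝ) (x : ℝ) : ℝ := ∫ t, GreenFn u v x t * f t

/-! ### Auxiliary lemmas -/

/-- A Fubini-type identity: `∫_0^T ∫_0^s g(τ) dτ ds = ∫_0^T (T - τ) g(τ) dτ`. -/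
lemma fub_aux {g : ℝ → ℝ} {T : ℝ} (hT : 0 ≤ T) (hg : IntegrableOn g (Set.Ioc 0 T)) :
    (∫ s in (0:ℝ)..T, ∫ τ in (0:ℝ)..s, g τ) = ∫ τ in (0:ℝ)..T, (T - τ) * g τ := by
  set μ := volume.restrict (Set.Ioc (0:ℝ) T) with hμdef
  have hμu : μ Set.univ < ⊤ := by
    rw [hμdef, Measure.restrict_apply_univ]; simp [Real.volume_Ioc]
  have h1 : Integrable (fun _ : ℝ => (1:ℝ)) μ := by
    rw [integrable_const_iff]; exact Or.inr ⟨hμu⟩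
  have hgi : Integrable g μ := hg
  have hprod : Integrable (fun z : ℝ × ℝ => g z.2) (μ.prod μ) := by
    simpa using h1.mul_prod hgi
  have hS : MeasurableSet {z : ℝ × ℝ | z.2 ≤ z.1} :=
    measurableSet_le measurable_snd measurable_fst
  have hind : Integrable
      (Function.uncurry fun s τ => ({z : ℝ × ℝ | z.2 ≤ z.1}.indicator (fun z => g z.2)) (s, τ))
      (μ.prod μ) := hprod.indicator hS
  have key := MeasureTheory.integral_integral_swap hind
  have hL : ∀ s ∈ Set.Ioc (0:ℝ) T,
      (∫ τ, ({z : ℝ × ℝ | z.2 ≤ z.1}.indicator (fun z => g z.2)) (s, τ) ∂μ)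
        = ∫ τ in (0:ℝ)..s, g τ := by
    intro s hs
    have h1 : (fun τ => ({z : ℝ × ℝ | z.2 ≤ z.1}.indicator (fun z => g z.2)) (s, τ))
        = (Set.Iic s).indicator g := by
      funext τ; simp [Set.indicator_apply, Set.mem_setOf_eq]
    rw [h1, integral_indicator measurableSet_Iic, hμdef,
      Measure.restrict_restrict measurableSet_Iic]
    have h2 : Set.Iic s ∩ Set.Ioc (0:ℝ) T = Set.Ioc 0 s := by
      ext τ; simp only [Set.mem_inter_iff, Set.mem_Iic, Set.mem_Ioc]
      exact ⟨fun h => ⟨h.2.1, h.1⟩, fun h => ⟨h.2, h.1, h.2.trans hs.2⟩⟩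
    rw [h2, intervalIntegral.integral_of_le hs.1.le]
  have hR : ∀ τ ∈ Set.Ioc (0:ℝ) T,
      (∫ s, ({z : ℝ × ℝ | z.2 ≤ z.1}.indicator (fun z => g z.2)) (s, τ) ∂μ)
        = (T - τ) * g τ := by
    intro τ hτ
    have h1 : (fun s => ({z : ℝ × ℝ | z.2 ≤ z.1}.indicator (fun z => g z.2)) (s, τ))
        = (Set.Ici τ).indicator (fun _ => g τ) := by
      funext s; simp [Set.indicator_apply, Set.mem_setOf_eq]
    rw [h1, integral_indicator measurableSet_Ici, hμdef,
      Measure.restrict_restrict measurableSet_Ici]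
    have h2 : Set.Ici τ ∩ Set.Ioc (0:ℝ) T = Set.Icc τ T := by
      ext s; simp only [Set.mem_inter_iff, Set.mem_Ici, Set.mem_Ioc, Set.mem_Icc]
      exact ⟨fun h => ⟨h.1, h.2.2⟩, fun h => ⟨h.1, hτ.1.trans_le h.1, h.2⟩⟩
    rw [h2, setIntegral_const, Real.volume_real_Icc_of_le (by linarith [hτ.2])]
    simp [smul_eq_mul]
  calc (∫ s in (0:ℝ)..T, ∫ τ in (0:ℝ)..s, g τ)
      = ∫ s in Set.Ioc (0:ℝ) T, (∫ τ in (0:ℝ)..s, g τ) := intervalIntegral.integral_of_le hT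
    _ = ∫ s, (∫ τ, ({z : ℝ × ℝ | z.2 ≤ z.1}.indicator (fun z => g z.2)) (s, τ) ∂μ) ∂μ := by
        rw [hμdef]; exact (setIntegral_congr_fun measurableSet_Ioc hL).symm
    _ = ∫ τ, (∫ s, ({z : ℝ × ℝ | z.2 ≤ z.1}.indicator (fun z => g z.2)) (s, τ) ∂μ) ∂μ := key
    _ = ∫ τ in Set.Ioc (0:ℝ) T, (T - τ) * g τ := by
        rw [hμdef]; exact setIntegral_congr_fun measurableSet_Ioc hR
    _ = ∫ τ in (0:ℝ)..T, (T - τ) * g τ := (intervalIntegral.integral_of_le hT).symm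

section core

variable {p w : ℝ → ℝ} {x : ℝ}

lemma Qcont (hpInt : ∀ a b : ℝ, IntervalIntegrable p volume a b) :
    Continuous fun s => ∫ ξ in x - s..x, p ξ := by
  have hP : Continuous fun b => ∫ ξ in (0:ℝ)..b, p ξ :=
    intervalIntegral.continuous_primitive hpInt 0
  have h : (fun s => ∫ ξ in x - s..x, p ξ)
      = fun s => (∫ ξ in (0:ℝ)..x, p ξ) - ∫ ξ in (0:ℝ)..(x - s), p ξ := by
    funext s
    rw [intervalIntegral.integral_interval_sub_left (hpInt 0 x) (hpInt 0 (x - s))]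
  rw [h]
  exact continuous_const.sub (hP.comp (continuous_const.sub continuous_id))

lemma Q_nonneg (hp : ∀ ξ, (0:ℝ) ≤ p ξ) {s : ℝ} (hs : 0 ≤ s) :
    0 ≤ ∫ ξ in x - s..x, p ξ :=
  intervalIntegral.integral_nonneg (by linarith) (fun ξ _ => hp ξ)

lemma Q_mono (hpInt : ∀ a b : ℝ, IntervalIntegrable p volume a b)
    (hp : ∀ ξ, (0:ℝ) ≤ p ξ) {s t : ℝ} (hst : s ≤ t) :
    (∫ ξ in x - s..x, p ξ) ≤ ∫ ξ in x - t..x, p ξ := by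
  have h1 : (∫ ξ in x - t..x, p ξ)
      = (∫ ξ in x - t..x - s, p ξ) + ∫ ξ in x - s..x, p ξ :=
    (intervalIntegral.integral_add_adjacent_intervals (hpInt _ _) (hpInt _ _)).symm
  have h2 : 0 ≤ ∫ ξ in x - t..x - s, p ξ :=
    intervalIntegral.integral_nonneg (by linarith) (fun ξ _ => hp ξ)
  linarith

lemma F_le (hpInt : ∀ a b : ℝ, IntervalIntegrable p volume a b)
    (hp : ∀ ξ, (0:ℝ) ≤ p ξ) {t : ℝ} (ht : 0 ≤ t) :
    (∫ s in (0:ℝ)..t, ∫ ξ in x - s..x, p ξ) ≤ t * ∫ ξ in x - t..x, p ξ := by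
  have hQc : Continuous fun s => ∫ ξ in x - s..x, p ξ := Qcont hpInt
  calc (∫ s in (0:ℝ)..t, ∫ ξ in x - s..x, p ξ)
      ≤ ∫ s in (0:ℝ)..t, (∫ ξ in x - t..x, p ξ) := by
        apply intervalIntegral.integral_mono_on ht (hQc.intervalIntegrable 0 t)
          (intervalIntegrable_const)
        exact fun s hs => Q_mono hpInt hp hs.2
    _ = t * ∫ ξ in x - t..x, p ξ := by simp [mul_comm]

lemma F_nonneg (hp : ∀ ξ, (0:ℝ) ≤ p ξ) {t : ℝ} (ht : 0 ≤ t) :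
    0 ≤ ∫ s in (0:ℝ)..t, ∫ ξ in x - s..x, p ξ :=
  intervalIntegral.integral_nonneg ht (fun s hs => Q_nonneg hp hs.1)

lemma derivw_mono (hwpos : ∀ y, 0 < w y) (hp : ∀ ξ, (0:ℝ) ≤ p ξ)
    (hftc : ∀ a b : ℝ, deriv w b - deriv w a = ∫ t in a..b, p t * w t) :
    Monotone (deriv w) := by
  intro a b hab
  have h := hftc a b
  have h2 : 0 ≤ ∫ t in a..b, p t * w t :=
    intervalIntegral.integral_nonneg hab (fun t _ => mul_nonneg (hp t) (hwpos t).le)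
  linarith

lemma w_tangent (hw : ContDiff ℝ 1 w) (hwpos : ∀ y, 0 < w y) (hp : ∀ ξ, (0:ℝ) ≤ p ξ)
    (hftc : ∀ a b : ℝ, deriv w b - deriv w a = ∫ t in a..b, p t * w t)
    {σ : ℝ} (hσ : σ ≤ x) : w x - (x - σ) * deriv w x ≤ w σ := by
  have hwd : Differentiable ℝ w := hw.differentiable one_ne_zero
  have hdc : Continuous (deriv w) := hw.continuous_deriv le_rfl
  have hftcw : w x - w σ = ∫ t in σ..x, deriv w t :=
    (intervalIntegral.integral_deriv_eq_sub (fun t _ => hwd t)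
      (hdc.intervalIntegrable σ x)).symm
  have hmono := derivw_mono hwpos hp hftc
  have hle : (∫ t in σ..x, deriv w t) ≤ ∫ t in σ..x, deriv w x := by
    apply intervalIntegral.integral_mono_on hσ (hdc.intervalIntegrable σ x)
      intervalIntegrable_const
    exact fun t ht => hmono ht.2
  rw [intervalIntegral.integral_const, smul_eq_mul] at hle
  linarith

lemma pcomp_int (hpInt : ∀ a b : ℝ, IntervalIntegrable p volume a b) (t : ℝ) :
    IntervalIntegrable (fun τ => p (x - τ)) volume 0 t := by
  simpa using (hpInt x (x - t)).comp_sub_left x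

lemma id1 (t : ℝ) : (∫ ξ in x - t..x, p ξ) = ∫ τ in (0:ℝ)..t, p (x - τ) := by
  rw [intervalIntegral.integral_comp_sub_left p x]
  simp

lemma id2 (hpInt : ∀ a b : ℝ, IntervalIntegrable p volume a b) {t : ℝ} (ht : 0 ≤ t) :
    (∫ s in (0:ℝ)..t, ∫ ξ in x - s..x, p ξ)
      = ∫ τ in (0:ℝ)..t, (t - τ) * p (x - τ) := by
  have h : (∫ s in (0:ℝ)..t, ∫ ξ in x - s..x, p ξ)
      = ∫ s in (0:ℝ)..t, ∫ τ in (0:ℝ)..s, p (x - τ) := by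
    congr 1; funext s; exact id1 s
  rw [h]
  exact fub_aux ht (pcomp_int hpInt t).1

lemma id3 (t : ℝ) :
    (∫ ξ in x - t..x, p ξ * (x - ξ)) = ∫ τ in (0:ℝ)..t, τ * p (x - τ) := by
  have h : (∫ τ in (0:ℝ)..t, τ * p (x - τ))
      = ∫ τ in (0:ℝ)..t, (fun y => p y * (x - y)) (x - τ) := by
    congr 1; funext τ; simp only [sub_sub_cancel]; ring
  rw [h, intervalIntegral.integral_comp_sub_left (fun y => p y * (x - y)) x, sub_zero]

lemma id4 {h' : ℝ} (t : ℝ) :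
    (∫ ξ in x - t..x, p ξ * (h' - (x - ξ))) = ∫ τ in (0:ℝ)..t, (h' - τ) * p (x - τ) := by
  have h : (∫ τ in (0:ℝ)..t, (h' - τ) * p (x - τ))
      = ∫ τ in (0:ℝ)..t, (fun y => p y * (h' - (x - y))) (x - τ) := by
    congr 1; funext τ; simp only [sub_sub_cancel]; ring
  rw [h, intervalIntegral.integral_comp_sub_left (fun y => p y * (h' - (x - y))) x, sub_zero]

lemma core_upper (hpInt : ∀ a b : ℝ, IntervalIntegrable p volume a b)
    (hp : ∀ ξ, (0:ℝ) ≤ p ξ) (hw : ContDiff ℝ 1 w) (hwpos : ∀ y, 0 < w y)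
    (hw'pos : ∀ y, 0 < deriv w y)
    (hftc : ∀ a b : ℝ, deriv w b - deriv w a = ∫ t in a..b, p t * w t)
    {t : ℝ} (ht : 0 ≤ t) :
    t * deriv w x ≤ w x * (1 + ∫ s in (0:ℝ)..t, ∫ ξ in x - s..x, p ξ) := by
  have hdc : Continuous (deriv w) := hw.continuous_deriv le_rfl
  have hwmono : Monotone w := (strictMono_of_deriv_pos hw'pos).monotone
  have key : ∀ s ∈ Set.Icc (0:ℝ) t,
      deriv w x - w x * (∫ ξ in x - s..x, p ξ) ≤ deriv w (x - s) := by
    intro s hs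
    have h1 := hftc (x - s) x
    have h2 : (∫ ξ in x - s..x, p ξ * w ξ) ≤ ∫ ξ in x - s..x, p ξ * w x := by
      apply intervalIntegral.integral_mono_on (by linarith [hs.1])
        ((hpInt _ _).mul_continuousOn hw.continuous.continuousOn)
        ((hpInt _ _).mul_const (w x))
      exact fun ξ hξ => mul_le_mul_of_nonneg_left (hwmono hξ.2) (hp ξ)
    rw [intervalIntegral.integral_mul_const] at h2
    nlinarith [h2]
  have hQc : Continuous fun s => ∫ ξ in x - s..x, p ξ := Qcont hpInt
  have hInt1 : IntervalIntegrable
      (fun s => deriv w x - w x * (∫ ξ in x - s..x, p ξ)) volume 0 t :=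
    (continuous_const.sub (continuous_const.mul hQc)).intervalIntegrable 0 t
  have hInt2 : IntervalIntegrable (fun s => deriv w (x - s)) volume 0 t :=
    (hdc.comp (continuous_const.sub continuous_id)).intervalIntegrable 0 t
  have hmono := intervalIntegral.integral_mono_on ht hInt1 hInt2 key
  have hLHS : (∫ s in (0:ℝ)..t, (deriv w x - w x * ∫ ξ in x - s..x, p ξ))
      = t * deriv w x - w x * ∫ s in (0:ℝ)..t, ∫ ξ in x - s..x, p ξ := by
    rw [intervalIntegral.integral_sub (intervalIntegrable_const)
      (show IntervalIntegrable (fun s => w x * ∫ ξ in x - s..x, p ξ) volume 0 t from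
        (continuous_const.mul hQc).intervalIntegrable 0 t),
      intervalIntegral.integral_const, intervalIntegral.integral_const_mul]
    simp [smul_eq_mul, mul_comm]
  have hRHS : (∫ s in (0:ℝ)..t, deriv w (x - s)) = w x - w (x - t) := by
    rw [intervalIntegral.integral_comp_sub_left (deriv w) x]
    simp only [sub_zero]
    exact intervalIntegral.integral_deriv_eq_sub (fun y _ => (hw.differentiable one_ne_zero) y)
      (hdc.intervalIntegrable _ _)
  rw [hLHS, hRHS] at hmono
  have := (hwpos (x - t)).le
  linarith

lemma core_lower (hpInt : ∀ a b : ℝ, IntervalIntegrable p volume a b)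
    (hp : ∀ ξ, (0:ℝ) ≤ p ξ) (hw : ContDiff ℝ 1 w) (hwpos : ∀ y, 0 < w y)
    (hw'pos : ∀ y, 0 < deriv w y)
    (hftc : ∀ a b : ℝ, deriv w b - deriv w a = ∫ t in a..b, p t * w t)
    {t : ℝ} (ht : 0 ≤ t) :
    w x * (∫ ξ in x - t..x, p ξ)
      ≤ deriv w x * (1 + t * (∫ ξ in x - t..x, p ξ)
          - ∫ s in (0:ℝ)..t, ∫ ξ in x - s..x, p ξ) := by
  have hg := pcomp_int (x := x) hpInt t
  have hJ : (∫ ξ in x - t..x, p ξ * (x - ξ))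
      = t * (∫ ξ in x - t..x, p ξ) - ∫ s in (0:ℝ)..t, ∫ ξ in x - s..x, p ξ := by
    rw [id3, id1, id2 hpInt ht, ← intervalIntegral.integral_const_mul,
      ← intervalIntegral.integral_sub (hg.const_mul t)
        (hg.continuousOn_mul (Continuous.continuousOn (by fun_prop)))]
    congr 1; funext τ; ring
  have h1 := hftc (x - t) x
  have h2 : (∫ ξ in x - t..x, p ξ * (w x - (x - ξ) * deriv w x))
      ≤ ∫ ξ in x - t..x, p ξ * w ξ := by
    apply intervalIntegral.integral_mono_on (by linarith)
      ((hpInt _ _).mul_continuousOn (Continuous.continuousOn (by fun_prop)))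
      ((hpInt _ _).mul_continuousOn hw.continuous.continuousOn)
    exact fun ξ hξ => mul_le_mul_of_nonneg_left (w_tangent hw hwpos hp hftc hξ.2) (hp ξ)
  have h3 : (∫ ξ in x - t..x, p ξ * (w x - (x - ξ) * deriv w x))
      = w x * (∫ ξ in x - t..x, p ξ)
        - deriv w x * (∫ ξ in x - t..x, p ξ * (x - ξ)) := by
    have e : (fun ξ => p ξ * (w x - (x - ξ) * deriv w x))
        = fun ξ => w x * p ξ - deriv w x * (p ξ * (x - ξ)) := by
      funext ξ; ring
    rw [e, intervalIntegral.integral_sub ((hpInt _ _).const_mul (w x))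
      (((hpInt _ _).mul_continuousOn (Continuous.continuousOn (by fun_prop))).const_mul
        (deriv w x)),
      intervalIntegral.integral_const_mul, intervalIntegral.integral_const_mul]
  have h4 := (hw'pos (x - t)).le
  have h5 : deriv w x * (∫ ξ in x - t..x, p ξ * (x - ξ))
      = deriv w x * (t * (∫ ξ in x - t..x, p ξ)
          - ∫ s in (0:ℝ)..t, ∫ ξ in x - s..x, p ξ) := by rw [hJ]
  have h6 : deriv w x * (1 + t * (∫ ξ in x - t..x, p ξ)
        - ∫ s in (0:ℝ)..t, ∫ ξ in x - s..x, p ξ)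
      = deriv w x + deriv w x * (t * (∫ ξ in x - t..x, p ξ)
          - ∫ s in (0:ℝ)..t, ∫ ξ in x - s..x, p ξ) := by ring
  linarith [h1, h2, h3, h4, h5, h6]

lemma core_crit (hpInt : ∀ a b : ℝ, IntervalIntegrable p volume a b)
    (hp : ∀ ξ, (0:ℝ) ≤ p ξ) (hw : ContDiff ℝ 1 w) (hwpos : ∀ y, 0 < w y)
    (hw'pos : ∀ y, 0 < deriv w y)
    (hftc : ∀ a b : ℝ, deriv w b - deriv w a = ∫ t in a..b, p t * w t)
    {h : ℝ} (hh : 0 < h)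
    (hF : (∫ s in (0:ℝ)..h, ∫ ξ in x - s..x, p ξ) = 1) :
    w x ≤ h * deriv w x := by
  by_contra hc
  push_neg at hc
  have hd : deriv w x < w x / h := by rwa [lt_div_iff₀ hh, mul_comm]
  have key : ∀ ξ ∈ Set.Icc (x - h) x,
      p ξ * (w x / h * (h - (x - ξ))) ≤ p ξ * w ξ := by
    intro ξ hξ
    apply mul_le_mul_of_nonneg_left _ (hp ξ)
    have htang := w_tangent hw hwpos hp hftc hξ.2
    have hxs : 0 ≤ x - ξ := by linarith [hξ.2]
    have h7 : w x / h * (h - (x - ξ)) ≤ w x - (x - ξ) * deriv w x := by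
      have h8 : w x / h * h = w x := by field_simp
      nlinarith [mul_le_mul_of_nonneg_left hd.le hxs]
    linarith
  have h1 := hftc (x - h) x
  have h2 : (∫ ξ in x - h..x, p ξ * (w x / h * (h - (x - ξ))))
      ≤ ∫ ξ in x - h..x, p ξ * w ξ := by
    apply intervalIntegral.integral_mono_on (by linarith)
      ((hpInt _ _).mul_continuousOn (Continuous.continuousOn (by fun_prop)))
      ((hpInt _ _).mul_continuousOn hw.continuous.continuousOn)
    exact key
  have h3 : (∫ ξ in x - h..x, p ξ * (w x / h * (h - (x - ξ))))
      = w x / h * ∫ ξ in x - h..x, p ξ * (h - (x - ξ)) := by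
    rw [← intervalIntegral.integral_const_mul]
    congr 1; funext ξ; ring
  have h5 : (∫ ξ in x - h..x, p ξ * (h - (x - ξ)))
      = ∫ s in (0:ℝ)..h, ∫ ξ in x - s..x, p ξ := by
    rw [id4, id2 hpInt hh.le]
  rw [h3, h5, hF, mul_one] at h2
  have h6 := (hw'pos (x - h)).le
  have h9 : deriv w x ≥ w x / h := by linarith
  have h10 : w x ≤ h * deriv w x := by
    rw [ge_iff_le, div_le_iff₀ hh] at h9; linarith
  linarith

end core
set_option maxHeartbeats 2000000 in
/-- Theorem 2.1: estimates (2.8), (2.9), (2.10) for a PFSS in terms of `d₁`, `d₂`, `d`. -/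
theorem theorem_2_1 (q u v : ℝ → ℝ) (hq_loc : LocallyIntegrable q) (hq : ∀ x, 1 ≤ q x)
    (huv : IsPFSS q u v) (d d₁ d₂ : ℝ → ℝ)
    (hd : ∀ x, 0 < d x ∧ (2 : ℝ) = d x * ∫ t in (x - d x)..(x + d x), q t)
    (hd₁ : ∀ x, 0 < d₁ x ∧
      (1 : ℝ) = ∫ t in (0 : ℝ)..(Real.sqrt 2 * d₁ x), ∫ ξ in (x - t)..x, q ξ)
    (hd₂ : ∀ x, 0 < d₂ x ∧
      (1 : ℝ) = ∫ t in (0 : ℝ)..(Real.sqrt 2 * d₂ x), ∫ ξ in x..(x + t), q ξ)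
    (x : ℝ) :
    (1 / Real.sqrt 2 ≤ deriv v x / v x * d₁ x ∧ deriv v x / v x * d₁ x ≤ Real.sqrt 2) ∧
    (1 / Real.sqrt 2 ≤ |deriv u x| / u x * d₂ x ∧ |deriv u x| / u x * d₂ x ≤ Real.sqrt 2) ∧
    (1 / Real.sqrt 2 * (d₁ x * d₂ x / (d₁ x + d₂ x)) ≤ u x * v x ∧
      u x * v x ≤ Real.sqrt 2 * (d₁ x * d₂ x / (d₁ x + d₂ x))) ∧
    ((1 / 4) * d x ≤ u x * v x ∧ u x * v x ≤ (3 / 2) * d x) := by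
  obtain ⟨hu1, hv1, hftcu, hftcv, hupos, hvpos, hu'neg, hv'pos, hwronsk,
    -, -, -, -, -, -, -, -, -⟩ := huv
  have hqInt : ∀ a b : ℝ, IntervalIntegrable q volume a b := fun a b =>
    (hq_loc.integrableOn_isCompact isCompact_uIcc).intervalIntegrable
  have hq0 : ∀ ξ, (0:ℝ) ≤ q ξ := fun ξ => le_trans zero_le_one (hq ξ)
  obtain ⟨hdpos, hdeq⟩ := hd x
  obtain ⟨hd1pos, hd1eq⟩ := hd₁ x
  obtain ⟨hd2pos, hd2eq⟩ := hd₂ x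
  have hs2 : Real.sqrt 2 * Real.sqrt 2 = 2 :=
    Real.mul_self_sqrt (by norm_num)
  have hs2pos : 0 < Real.sqrt 2 := Real.sqrt_pos.mpr (by norm_num)
  have hh₁pos : 0 < Real.sqrt 2 * d₁ x := mul_pos hs2pos hd1pos
  have hh₂pos : 0 < Real.sqrt 2 * d₂ x := mul_pos hs2pos hd2pos
  -- the reflected solution
  have hPInt : ∀ a b : ℝ, IntervalIntegrable (fun ξ => q (2*x - ξ)) volume a b := by
    intro a b
    simpa using (hqInt (2*x - a) (2*x - b)).comp_sub_left (2*x)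
  have hP0 : ∀ ξ, (0:ℝ) ≤ q (2*x - ξ) := fun ξ => hq0 _
  have hWc : ContDiff ℝ 1 (fun y => u (2*x - y)) :=
    hu1.comp (contDiff_const.sub contDiff_id)
  have hWpos : ∀ y, 0 < u (2*x - y) := fun y => hupos _
  have hWderiv : ∀ y, deriv (fun y => u (2*x - y)) y = -deriv u (2*x - y) := fun y =>
    deriv_comp_const_sub u (2*x) y
  have hW'pos : ∀ y, 0 < deriv (fun y => u (2*x - y)) y := by
    intro y; rw [hWderiv]; linarith [hu'neg (2*x - y)]
  have hWftc : ∀ a b : ℝ, deriv (fun y => u (2*x - y)) b - deriv (fun y => u (2*x - y)) a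
      = ∫ t in a..b, q (2*x - t) * u (2*x - t) := by
    intro a b
    rw [hWderiv, hWderiv]
    have h1 := hftcu (2*x - b) (2*x - a)
    have h2 : (∫ t in a..b, q (2*x - t) * u (2*x - t))
        = ∫ t in 2*x - b..2*x - a, q t * u t :=
      intervalIntegral.integral_comp_sub_left (fun s => q s * u s) (2*x)
    rw [h2]
    linarith [h1]
  have h2xx : 2*x - x = x := by ring
  have hQ2eq : ∀ s : ℝ, (∫ ξ in x - s..x, q (2*x - ξ)) = ∫ ξ in x..x + s, q ξ := by
    intro s
    rw [intervalIntegral.integral_comp_sub_left q (2*x)]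
    congr 1 <;> ring
  have hF2eq : ∀ t : ℝ, (∫ s in (0:ℝ)..t, ∫ ξ in x - s..x, q (2*x - ξ))
      = ∫ s in (0:ℝ)..t, ∫ ξ in x..x + s, q ξ := by
    intro t; congr 1; funext s; exact hQ2eq s
  -- (2.8) for v
  have hVu : Real.sqrt 2 * d₁ x * deriv v x ≤ v x * 2 := by
    have h := core_upper (x := x) hqInt hq0 hv1 hvpos hv'pos hftcv hh₁pos.le
    rw [← hd1eq] at h
    norm_num at h
    linarith
  have hVl : v x ≤ Real.sqrt 2 * d₁ x * deriv v x :=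
    core_crit hqInt hq0 hv1 hvpos hv'pos hftcv hh₁pos hd1eq.symm
  -- (2.8) for u (reflected)
  have hUu : Real.sqrt 2 * d₂ x * (-deriv u x) ≤ u x * 2 := by
    have h := core_upper (x := x) hPInt hP0 hWc hWpos hW'pos hWftc hh₂pos.le
    rw [hF2eq, ← hd2eq, hWderiv x, h2xx] at h
    norm_num at h
    linarith
  have hUl : u x ≤ Real.sqrt 2 * d₂ x * (-deriv u x) := by
    have h := core_crit (x := x) hPInt hP0 hWc hWpos hW'pos hWftc hh₂pos (by
      rw [hF2eq]; exact hd2eq.symm)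
    rw [hWderiv x, h2xx] at h
    simpa using h
  -- material for (2.10)
  have hQsum : d x * ((∫ ξ in x - d x..x, q ξ) + ∫ ξ in x..x + d x, q ξ) = 2 := by
    have hadd : (∫ ξ in x - d x..x, q ξ) + (∫ ξ in x..x + d x, q ξ)
        = ∫ ξ in x - d x..x + d x, q ξ :=
      intervalIntegral.integral_add_adjacent_intervals (hqInt _ _) (hqInt _ _)
    rw [hadd]; linarith [hdeq]
  have hVud : d x * deriv v x
      ≤ v x * (1 + ∫ s in (0:ℝ)..d x, ∫ ξ in x - s..x, q ξ) :=
    core_upper (x := x) hqInt hq0 hv1 hvpos hv'pos hftcv hdpos.le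
  have hUud : d x * (-deriv u x)
      ≤ u x * (1 + ∫ s in (0:ℝ)..d x, ∫ ξ in x..x + s, q ξ) := by
    have h := core_upper (x := x) hPInt hP0 hWc hWpos hW'pos hWftc hdpos.le
    rw [hF2eq, hWderiv x, h2xx] at h
    exact h
  have hVld : v x * (∫ ξ in x - d x..x, q ξ)
      ≤ deriv v x * (1 + d x * (∫ ξ in x - d x..x, q ξ)
          - ∫ s in (0:ℝ)..d x, ∫ ξ in x - s..x, q ξ) :=
    core_lower (x := x) hqInt hq0 hv1 hvpos hv'pos hftcv hdpos.le
  have hUld : u x * (∫ ξ in x..x + d x, q ξ)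
      ≤ (-deriv u x) * (1 + d x * (∫ ξ in x..x + d x, q ξ)
          - ∫ s in (0:ℝ)..d x, ∫ ξ in x..x + s, q ξ) := by
    have h := core_lower (x := x) hPInt hP0 hWc hWpos hW'pos hWftc hdpos.le
    rw [hF2eq, hQ2eq, hWderiv x, h2xx] at h
    exact h
  have hF1le : (∫ s in (0:ℝ)..d x, ∫ ξ in x - s..x, q ξ)
      ≤ d x * ∫ ξ in x - d x..x, q ξ := F_le hqInt hq0 hdpos.le
  have hF2le : (∫ s in (0:ℝ)..d x, ∫ ξ in x..x + s, q ξ)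
      ≤ d x * ∫ ξ in x..x + d x, q ξ := by
    have h := F_le (x := x) hPInt hP0 hdpos.le
    rw [hF2eq, hQ2eq] at h
    exact h
  have hF1nn : 0 ≤ ∫ s in (0:ℝ)..d x, ∫ ξ in x - s..x, q ξ := F_nonneg hq0 hdpos.le
  have hF2nn : 0 ≤ ∫ s in (0:ℝ)..d x, ∫ ξ in x..x + s, q ξ := by
    have h := F_nonneg (x := x) hP0 hdpos.le
    rw [hF2eq] at h
    exact h
  have hQ1nn : 0 ≤ ∫ ξ in x - d x..x, q ξ := Q_nonneg hq0 hdpos.le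
  have hQ2nn : 0 ≤ ∫ ξ in x..x + d x, q ξ := by
    have h := Q_nonneg (x := x) hP0 hdpos.le
    rw [hQ2eq] at h
    exact h
  -- abbreviations
  have hwr : deriv v x * u x + (-deriv u x) * v x = 1 := by
    have := hwronsk x; linarith
  have hA : 0 < v x := hvpos x
  have hB : 0 < u x := hupos x
  have hR : 0 < deriv v x := hv'pos x
  have hS : 0 < -deriv u x := by linarith [hu'neg x]
  have habs : |deriv u x| = -deriv u x := abs_of_neg (hu'neg x)
  refine ⟨⟨?_, ?_⟩, ⟨?_, ?_⟩, ⟨?_, ?_⟩, ⟨?_, ?_⟩⟩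
  · -- 1 / √2 ≤ v'/v * d₁
    rw [div_mul_eq_mul_div, div_le_div_iff₀ hs2pos hA, one_mul]
    nlinarith [hVl]
  · -- v'/v * d₁ ≤ √2
    rw [div_mul_eq_mul_div, div_le_iff₀ hA]
    nlinarith [mul_le_mul_of_nonneg_left hVu hs2pos.le, hs2, hA, hs2pos]
  · rw [habs, div_mul_eq_mul_div, div_le_div_iff₀ hs2pos hB, one_mul]
    nlinarith [hUl]
  · rw [habs, div_mul_eq_mul_div, div_le_iff₀ hB]
    nlinarith [mul_le_mul_of_nonneg_left hUu hs2pos.le, hs2, hB, hs2pos]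
  · -- 1/√2 * (d₁ d₂/(d₁+d₂)) ≤ u v
    have hd12 : 0 < d₁ x + d₂ x := by linarith
    rw [div_mul_div_comm, div_le_iff₀ (mul_pos hs2pos hd12)]
    have k1 := mul_le_mul_of_nonneg_right hVu (mul_nonneg hd2pos.le hB.le)
    have k2 := mul_le_mul_of_nonneg_right hUu (mul_nonneg hd1pos.le hA.le)
    have k3 : Real.sqrt 2*(d₁ x)*(d₂ x)*(deriv v x * u x + (-deriv u x) * v x)
        = Real.sqrt 2*(d₁ x)*(d₂ x) := by rw [hwr, mul_one]
    have k5 : Real.sqrt 2*(d₁ x)*(d₂ x) ≤ 2*(u x*v x)*(d₁ x+d₂ x) := by linarith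
    have k6 := mul_le_mul_of_nonneg_left k5 hs2pos.le
    have k7 : Real.sqrt 2*(Real.sqrt 2*(d₁ x)*(d₂ x)) = 2*((d₁ x)*(d₂ x)) := by
      rw [show Real.sqrt 2*(Real.sqrt 2*(d₁ x)*(d₂ x))
        = (Real.sqrt 2*Real.sqrt 2)*((d₁ x)*(d₂ x)) from by ring, hs2]
    linarith
  · have hd12 : 0 < d₁ x + d₂ x := by linarith
    rw [← mul_div_assoc, le_div_iff₀ hd12]
    have l1 := mul_le_mul_of_nonneg_right hVl (mul_nonneg hd2pos.le hB.le)
    have l2 := mul_le_mul_of_nonneg_right hUl (mul_nonneg hd1pos.le hA.le)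
    have k3 : Real.sqrt 2*(d₁ x)*(d₂ x)*(deriv v x * u x + (-deriv u x) * v x)
        = Real.sqrt 2*(d₁ x)*(d₂ x) := by rw [hwr, mul_one]
    linarith
  · -- (1/4) d ≤ u v
    have m1 := mul_le_mul_of_nonneg_right hVud hB.le
    have m2 := mul_le_mul_of_nonneg_right hUud hA.le
    have m3 := mul_le_mul_of_nonneg_left hF1le (mul_nonneg hA.le hB.le)
    have m4 := mul_le_mul_of_nonneg_left hF2le (mul_nonneg hA.le hB.le)
    have m5 : d x*(deriv v x * u x + (-deriv u x) * v x) = d x := by rw [hwr, mul_one]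
    have m6 : (v x)*(u x)*(d x*((∫ ξ in x - d x..x, q ξ) + ∫ ξ in x..x + d x, q ξ))
        = (v x)*(u x)*2 := by rw [hQsum]
    linarith
  · -- u v ≤ (3/2) d
    have e1 : (0:ℝ) ≤ d x * ∫ ξ in x - d x..x, q ξ := mul_nonneg hdpos.le hQ1nn
    have e2 : (0:ℝ) ≤ d x * ∫ ξ in x..x + d x, q ξ := mul_nonneg hdpos.le hQ2nn
    have n1 : v x * (∫ ξ in x - d x..x, q ξ)
        ≤ deriv v x * (1 + d x * ∫ ξ in x - d x..x, q ξ) := by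
      refine le_trans hVld (mul_le_mul_of_nonneg_left (by linarith) hR.le)
    have n2 : u x * (∫ ξ in x..x + d x, q ξ)
        ≤ (-deriv u x) * (1 + d x * ∫ ξ in x..x + d x, q ξ) := by
      refine le_trans hUld (mul_le_mul_of_nonneg_left (by linarith) hS.le)
    have n3 := mul_le_mul_of_nonneg_right n1
      (mul_nonneg hB.le (by linarith : (0:ℝ) ≤ 1 + d x * ∫ ξ in x..x + d x, q ξ))
    have n4 := mul_le_mul_of_nonneg_right n2
      (mul_nonneg hA.le (by linarith : (0:ℝ) ≤ 1 + d x * ∫ ξ in x - d x..x, q ξ))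
    have n5 : (deriv v x * u x + (-deriv u x) * v x)
          * ((1 + d x * ∫ ξ in x - d x..x, q ξ) * (1 + d x * ∫ ξ in x..x + d x, q ξ))
        = (1 + d x * ∫ ξ in x - d x..x, q ξ) * (1 + d x * ∫ ξ in x..x + d x, q ξ) := by
      rw [hwr, one_mul]
    have n6 : (v x * u x) * ((∫ ξ in x - d x..x, q ξ) + (∫ ξ in x..x + d x, q ξ)
          + 2*(((d x * ∫ ξ in x - d x..x, q ξ)) * ((∫ ξ in x..x + d x, q ξ))))
        ≤ (1 + d x * ∫ ξ in x - d x..x, q ξ) * (1 + d x * ∫ ξ in x..x + d x, q ξ) := by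
      nlinarith [n3, n4, n5]
    have n7 := mul_le_mul_of_nonneg_left n6 hdpos.le
    have m : (v x * u x)*(d x*((∫ ξ in x - d x..x, q ξ) + ∫ ξ in x..x + d x, q ξ))
        = (v x * u x)*2 := by rw [hQsum]
    have m2' : (d x)*(d x*((∫ ξ in x - d x..x, q ξ) + ∫ ξ in x..x + d x, q ξ))
        = (d x)*2 := by rw [hQsum]
    have hcnn : (0:ℝ) ≤ (d x * ∫ ξ in x - d x..x, q ξ) * (d x * ∫ ξ in x..x + d x, q ξ) :=
      mul_nonneg e1 e2
    have hddc : (0:ℝ) ≤ d x * ((d x * ∫ ξ in x - d x..x, q ξ)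
        * (d x * ∫ ξ in x..x + d x, q ξ)) := mul_nonneg hdpos.le hcnn
    have key : (2*(u x * v x)) * (1 + (d x * ∫ ξ in x - d x..x, q ξ)
          * (d x * ∫ ξ in x..x + d x, q ξ))
        ≤ (3*(d x)) * (1 + (d x * ∫ ξ in x - d x..x, q ξ)
          * (d x * ∫ ξ in x..x + d x, q ξ)) := by
      nlinarith [n7, m, m2', hddc]
    have hcpos : (0:ℝ) < 1 + (d x * ∫ ξ in x - d x..x, q ξ)
        * (d x * ∫ ξ in x..x + d x, q ξ) := by linarith
    have := le_of_mul_le_mul_right key hcpos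
    linarith
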